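/- Let g : [0, h] → ℝ be C³ with g(δt) = 0 and g'(δt) > 0 for some δt ∈ [0, h), and suppose g attains an interior maximum at δt + δt* with g''(δt) < 0. Then the Newton-type estimate δt*₀ := −g'(δt)/g''(δt) satisfies |δt* − δt*₀| = O(h²) as h → 0 (with δt, δt* = O(h)). -/

import Mathlib

open Set

/-- Newton-type estimate of the interior-maximum time within one integration
step: if `g` is C³, `g(δt) = 0`, `g'(δt) > 0`, `g` has a critical point at
`δt + δt*` inside the step, and `g''(δt) ≤ −m < 0`, then
`δt*₀ := −g'(δt)/g''(δt)` satisfies `|δt* − δt*₀| = O(h²)` as `h → 0`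
(uniformly for `δt, δt* = O(h)`). -/
theorem interior_max_newton_estimate
    (g : ℝ → ℝ) (hg : ContDiff ℝ 3 g) (m : ℝ) (hm : 0 < m) :
    ∃ C > 0, ∃ h₀ > 0, ∀ h δt δts : ℝ, 0 < h → h < h₀ →
      0 ≤ δt → δt < h → 0 ≤ δts → δt + δts ≤ h →
      g δt = 0 → 0 < deriv g δt →
      deriv g (δt + δts) = 0 →
      iteratedDeriv 2 g δt ≤ -m →
      |δts - (-(deriv g δt) / iteratedDeriv 2 g δt)| ≤ C * h ^ 2 := by
  -- second iterated derivative is C¹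
  have hg3 : ContDiff ℝ ((1 : ℕ) + (2 : ℕ) : ℕ) g := by
    exact_mod_cast hg
  have hf2 : ContDiff ℝ 1 (iteratedDeriv 2 g) := by
    rw [iteratedDeriv_eq_iterate]
    exact hg3.iterate_deriv' 1 2
  -- bound the third derivative on [0,1]
  obtain ⟨M, hM⟩ := (isCompact_Icc (a := (0:ℝ)) (b := 1)).exists_bound_of_continuousOn
    (hf2.continuous_deriv le_rfl).continuousOn
  set M' : ℝ := max M 0 with hM'def
  have hM'0 : 0 ≤ M' := le_max_right _ _
  have hMbd : ∀ x ∈ Icc (0:ℝ) 1, ‖deriv (iteratedDeriv 2 g) x‖ ≤ M' :=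
    fun x hx => (hM x hx).trans (le_max_left _ _)
  -- Lipschitz bound for iteratedDeriv 2 g on [0,1]
  have hlip : ∀ x ∈ Icc (0:ℝ) 1, ∀ y ∈ Icc (0:ℝ) 1,
      ‖iteratedDeriv 2 g y - iteratedDeriv 2 g x‖ ≤ M' * ‖y - x‖ := by
    intro x hx y hy
    exact Convex.norm_image_sub_le_of_norm_deriv_le
      (fun z _ => (hf2.differentiable (by norm_num)).differentiableAt) hMbd (convex_Icc _ _) hx hy
  -- deriv g is differentiable with derivative iteratedDeriv 2 g
  have h2eq : iteratedDeriv 2 g = deriv (deriv g) := by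
    rw [show (2:ℕ) = 1 + 1 from rfl, iteratedDeriv_succ, iteratedDeriv_one]
  have hf1 : ContDiff ℝ ((2 : ℕ) : ℕ∞) (deriv g) := by
    have : ContDiff ℝ ((2 : ℕ) + (1 : ℕ) : ℕ) g := by exact_mod_cast hg
    have := (this.iterate_deriv' 2 1)
    simpa using this
  have hd1 : ∀ x : ℝ, HasDerivAt (deriv g) (iteratedDeriv 2 g x) x := by
    intro x
    rw [h2eq]
    exact ((hf1.differentiable (by norm_num)) x).hasDerivAt
  refine ⟨(M' + 1) / m, by positivity, 1, one_pos, ?_⟩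
  intro h δt δts hh hh1 hδt0 hδth hδts0 hsum hg0 hgd1 hcrit hgd2
  -- points are in [0,1]
  have hδtmem : δt ∈ Icc (0:ℝ) 1 := ⟨hδt0, by linarith⟩
  have hh1' : h ≤ 1 := le_of_lt hh1
  -- Taylor-type estimate for deriv g at δt + δts
  set φ : ℝ → ℝ := fun s => deriv g (δt + s) - deriv g δt - iteratedDeriv 2 g δt * s with hφ
  have hφderiv : ∀ s ∈ Icc 0 δts, HasDerivWithinAt φ
      (iteratedDeriv 2 g (δt + s) - iteratedDeriv 2 g δt) (Icc 0 δts) s := by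
    intro s hs
    have h1 : HasDerivAt (fun s => deriv g (δt + s)) (iteratedDeriv 2 g (δt + s)) s := by
      have := (hd1 (δt + s)).comp s ((hasDerivAt_id s).const_add δt)
      rw [mul_one] at this
      exact this
    have h2 : HasDerivAt φ (iteratedDeriv 2 g (δt + s) - iteratedDeriv 2 g δt) s := by
      have h3 := (h1.sub_const (deriv g δt)).sub
        ((hasDerivAt_id s).const_mul (iteratedDeriv 2 g δt))
      rw [mul_one] at h3
      exact h3
    exact h2.hasDerivWithinAt
  have hφbound : ∀ s ∈ Ico 0 δts,
      ‖iteratedDeriv 2 g (δt + s) - iteratedDeriv 2 g δt‖ ≤ M' * δts := by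
    intro s hs
    have hmem : δt + s ∈ Icc (0:ℝ) 1 := ⟨by linarith [hs.1], by linarith [hs.2.le]⟩
    have := hlip δt hδtmem (δt + s) hmem
    have hnorm : ‖δt + s - δt‖ = s := by
      rw [add_sub_cancel_left, Real.norm_eq_abs, abs_of_nonneg hs.1]
    rw [hnorm] at this
    calc ‖iteratedDeriv 2 g (δt + s) - iteratedDeriv 2 g δt‖ ≤ M' * s := this
      _ ≤ M' * δts := by nlinarith [hs.2.le, hs.1]
  have hest := norm_image_sub_le_of_norm_deriv_le_segment' hφderiv hφbound δts
    (right_mem_Icc.2 hδts0)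
  have hφ0 : φ 0 = 0 := by simp [hφ]
  have hφδts : φ δts = -(deriv g δt) - iteratedDeriv 2 g δt * δts := by
    simp [hφ, hcrit]
  rw [hφ0, sub_zero, sub_zero, hφδts] at hest
  -- algebra
  have hM2ne : iteratedDeriv 2 g δt ≠ 0 := by intro hc; rw [hc] at hgd2; linarith
  have habs : |iteratedDeriv 2 g δt| ≥ m := by
    rw [abs_of_nonpos (by linarith)]; linarith
  have hkey : δts - (-(deriv g δt) / iteratedDeriv 2 g δt) =
      (iteratedDeriv 2 g δt * δts + deriv g δt) / iteratedDeriv 2 g δt := by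
    field_simp
    ring
  rw [hkey, abs_div]
  rw [div_le_iff₀ (lt_of_lt_of_le hm habs)]
  have h1 : |iteratedDeriv 2 g δt * δts + deriv g δt| ≤ M' * δts * δts := by
    have : ‖-(deriv g δt) - iteratedDeriv 2 g δt * δts‖
        = |iteratedDeriv 2 g δt * δts + deriv g δt| := by
      rw [Real.norm_eq_abs, ← abs_neg]; ring_nf
    rw [this] at hest
    linarith
  have hδtsh : δts ≤ h := by linarith
  calc |iteratedDeriv 2 g δt * δts + deriv g δt| ≤ M' * δts * δts := h1
    _ ≤ (M' + 1) * h ^ 2 := by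
      have h2 : δts * δts ≤ h * h := mul_le_mul hδtsh hδtsh hδts0 hh.le
      have h3 : M' * (δts * δts) ≤ M' * (h * h) := mul_le_mul_of_nonneg_left h2 hM'0
      nlinarith [sq_nonneg h]
    _ = (M' + 1) / m * h ^ 2 * m := by field_simp
    _ ≤ (M' + 1) / m * h ^ 2 * |iteratedDeriv 2 g δt| := by
      have : 0 ≤ (M' + 1) / m * h ^ 2 := by positivity
      nlinarith
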